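/- arXiv:0706.4112 — 2 statements merged into one kernel-verified Lean document; each statement's English description precedes it below -/
import Mathlib

section
/- For every real ε with 0 < ε < 1/2, every graph H on k vertices, and every H-free graph G = (V,E) on n ≥ 2 vertices, there are disjoint subsets A and B of V with |A|, |B| ≥ ε^{k−1}·n/k such that either every vertex in A has at most ε·|B| neighbors in B, or every vertex in A has at least (1−ε)·|B| neighbors in B. -/
open scoped Classical

private lemma two_mul_le_two_pow : ∀ s : ℕ, 1 ≤ s → 2 * s ≤ 2 ^ s := by
  intro s
  induction s with
  | zero => omega
  | succ s ih =>
    intro _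
    rcases Nat.eq_or_lt_of_le (Nat.zero_le s) with h | h
    · simp [← h]
    · have := ih h
      have : 2 ^ s ≥ 2 := by
        calc 2 = 2 * 1 := by ring
        _ ≤ 2 * s := by omega
        _ ≤ 2 ^ s := this
      calc 2 * (s + 1) = 2 * s + 2 := by ring
      _ ≤ 2 ^ s + 2 ^ s := by omega
      _ = 2 ^ (s + 1) := by ring

private lemma aux_main (ε : ℝ) (hε : 0 < ε) (hε2 : ε < 1 / 2)
    {k n : ℕ} (H : SimpleGraph (Fin k)) (G : SimpleGraph (Fin n))
    (hfree : IsEmpty (H ↪g G)) (m : ℕ) (hm : 1 ≤ m) (hk : 0 < k)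
    (hmn : (n : ℝ) ≤ 2 * k * m) :
    ∀ d t : ℕ, t + d = k → ∀ W : Fin k → Finset (Fin n),
    (∀ i j : Fin k, i ≠ j → Disjoint (W i) (W j)) →
    (∀ a : Fin k, (a : ℕ) < t → (W a).card = 1) →
    (∀ j : Fin k, t ≤ (j : ℕ) → (ε ^ t * m : ℝ) ≤ (W j).card) →
    (∀ a b : Fin k, (a : ℕ) < t → a < b →
      ∀ x ∈ W a, ∀ y ∈ W b, (G.Adj x y ↔ H.Adj a b)) →
    ∃ A B : Finset (Fin n), Disjoint A B ∧
      (A.card : ℝ) ≥ ε ^ (k - 1) * n / k ∧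
      (B.card : ℝ) ≥ ε ^ (k - 1) * n / k ∧
      ((∀ a ∈ A, ((B.filter (G.Adj a)).card : ℝ) ≤ ε * B.card) ∨
       (∀ a ∈ A, ((B.filter (G.Adj a)).card : ℝ) ≥ (1 - ε) * B.card)) := by
  intro d
  induction d with
  | zero =>
    -- t = k : build an embedding of H into G, contradiction
    intro t ht W hdis hsing hsize hadj
    have hne : ∀ a : Fin k, (W a).Nonempty := by
      intro a
      rw [← Finset.card_pos, hsing a (by have := a.isLt; omega)]
      norm_num
    set f : Fin k → Fin n := fun a => (hne a).choose with hf
    have hfmem : ∀ a : Fin k, f a ∈ W a := fun a => (hne a).choose_spec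
    have hinj : Function.Injective f := by
      intro a b hab
      by_contra hne'
      exact (Finset.disjoint_left.mp (hdis a b hne') (hfmem a)) (hab ▸ hfmem b)
    have hmap : ∀ a b : Fin k, G.Adj (f a) (f b) ↔ H.Adj a b := by
      intro a b
      rcases lt_trichotomy a b with h | h | h
      · exact hadj a b (by have := a.isLt; omega) h (f a) (hfmem a) (f b) (hfmem b)
      · subst h
        simp
      · rw [G.adj_comm, H.adj_comm]
        exact hadj b a (by have := b.isLt; omega) h (f b) (hfmem b) (f a) (hfmem a)
    exact (hfree.false ⟨⟨f, hinj⟩, hmap _ _⟩).elim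
  | succ d ih =>
    intro t ht W hdis hsing hsize hadj
    have htk : t < k := by omega
    set tt : Fin k := ⟨t, htk⟩ with htt
    have hεt : (0:ℝ) < ε ^ t := pow_pos hε t
    have hm' : (1:ℝ) ≤ (m:ℝ) := by exact_mod_cast hm
    have hWtpos : (0:ℝ) < ((W tt).card : ℝ) := by
      calc (0:ℝ) < ε ^ t * m := by positivity
      _ ≤ _ := hsize tt (le_refl t)
    have hWtne : (W tt).Nonempty := by
      rw [← Finset.card_pos]
      exact_mod_cast hWtpos
    set S : Fin n → Fin k → Finset (Fin n) := fun v j =>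
      if H.Adj tt j then (W j).filter (G.Adj v)
      else (W j).filter (fun y => ¬ G.Adj v y) with hS
    have hSsub : ∀ v j, S v j ⊆ W j := by
      intro v j
      rw [hS]
      dsimp only
      split <;> exact Finset.filter_subset _ _
    by_cases hgood : ∃ v ∈ W tt, ∀ j : Fin k, t < (j : ℕ) →
        (ε * ((W j).card) : ℝ) ≤ ((S v j).card : ℝ)
    · -- good vertex : extend the embedding
      obtain ⟨v, hv, hgv⟩ := hgood
      set W' : Fin k → Finset (Fin n) := fun j =>
        if (j : ℕ) < t then W j else if (j : ℕ) = t then {v} else S v j with hW'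
      have hsub : ∀ j, W' j ⊆ W j := by
        intro j
        rw [hW']
        dsimp only
        split
        · exact Finset.Subset.refl _
        · split
          · rename_i h1 h2
            have : j = tt := by apply Fin.ext; simpa using h2
            rw [this]
            simpa using hv
          · exact hSsub v j
      refine ih (t + 1) (by omega) W' ?_ ?_ ?_ ?_
      · intro i j hij
        exact (hdis i j hij).mono (hsub i) (hsub j)
      · intro a ha
        rcases Nat.lt_or_ge (a : ℕ) t with h | h
        · rw [hW']; dsimp only; rw [if_pos h]
          exact hsing a h
        · have hat : (a : ℕ) = t := by omega
          rw [hW']; dsimp only; rw [if_neg (by omega), if_pos hat]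
          exact Finset.card_singleton v
      · intro j hj
        have hjt : t < (j : ℕ) := by omega
        have : W' j = S v j := by
          rw [hW']; dsimp only; rw [if_neg (by omega), if_neg (by omega)]
        rw [this, pow_succ]
        calc ε ^ t * ε * (m:ℝ) = ε * (ε ^ t * m) := by ring
        _ ≤ ε * ((W j).card : ℝ) := by
            apply mul_le_mul_of_nonneg_left (hsize j (by omega)) hε.le
        _ ≤ ((S v j).card : ℝ) := hgv j hjt
      · intro a b ha hab x hx y hy
        rcases Nat.lt_or_ge (a : ℕ) t with h | h
        · have hxa : x ∈ W a := hsub a hx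
          have hyb : y ∈ W b := hsub b hy
          exact hadj a b h hab x hxa y hyb
        · have hat : (a : ℕ) = t := by omega
          have haeq : a = tt := by apply Fin.ext; simpa using hat
          have hbt : t < (b : ℕ) := by
            have := hab
            rw [Fin.lt_def] at this
            omega
          have hxv : x = v := by
            have : W' a = {v} := by
              rw [hW']; dsimp only; rw [if_neg (by omega), if_pos hat]
            rw [this] at hx
            simpa using hx
          have hyS : y ∈ S v b := by
            have : W' b = S v b := by
              rw [hW']; dsimp only; rw [if_neg (by omega), if_neg (by omega)]
            rwa [this] at hy
          subst hxv
          rw [haeq]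
          rw [hS] at hyS
          dsimp only at hyS
          by_cases hH : H.Adj tt b
          · rw [if_pos hH] at hyS
            exact iff_of_true (Finset.mem_filter.mp hyS).2 hH
          · rw [if_neg hH] at hyS
            exact iff_of_false (Finset.mem_filter.mp hyS).2 hH
    · -- no good vertex : find a sparse/dense pair
      push_neg at hgood
      have hbad' : ∀ v : Fin n, ∃ j : Fin k,
          v ∈ W tt → (t < (j : ℕ) ∧ ((S v j).card : ℝ) < ε * ((W j).card)) := by
        intro v
        by_cases hv : v ∈ W tt
        · obtain ⟨j, hj1, hj2⟩ := hgood v hv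
          exact ⟨j, fun _ => ⟨hj1, hj2⟩⟩
        · exact ⟨tt, fun h => absurd h hv⟩
      choose jf hjf using hbad'
      set T : Finset (Fin k) := Finset.univ.filter (fun j : Fin k => t < (j : ℕ)) with hT
      have hmaps : ∀ v ∈ W tt, jf v ∈ T := by
        intro v hv
        rw [hT, Finset.mem_filter]
        exact ⟨Finset.mem_univ _, (hjf v hv).1⟩
      have hTne : T.Nonempty := by
        obtain ⟨v, hv⟩ := hWtne
        exact ⟨jf v, hmaps v hv⟩
      have hTpos : 0 < T.card := Finset.card_pos.mpr hTne
      -- pigeonhole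
      obtain ⟨j₀, hj₀T, hfib⟩ := Finset.exists_le_sum_fiber_of_maps_to_of_nsmul_le_sum
        (f := jf) (s := W tt) (t := T) (w := fun _ => (1:ℝ))
        (b := ((W tt).card : ℝ) / T.card) hmaps hTne
        (by
          rw [Finset.sum_const, nsmul_eq_mul, nsmul_eq_mul]
          rw [mul_one, mul_div_cancel₀]
          exact_mod_cast hTpos.ne')
      have hj₀t : t < (j₀ : ℕ) := by
        rw [hT, Finset.mem_filter] at hj₀T
        exact hj₀T.2
      set A : Finset (Fin n) := (W tt).filter (fun v => jf v = j₀) with hA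
      set B : Finset (Fin n) := W j₀ with hB
      have hAcard : ((W tt).card : ℝ) / T.card ≤ (A.card : ℝ) := by
        calc ((W tt).card : ℝ) / T.card ≤ ∑ x ∈ (W tt).filter (fun v => jf v = j₀), (1:ℝ) := hfib
        _ = A.card := by rw [Finset.sum_const, nsmul_eq_mul, mul_one, hA]
      -- arithmetic facts
      set s : ℕ := k - 1 - t with hs
      have hs1 : 1 ≤ s := by
        have := j₀.isLt
        omega
      have hksplit : k - 1 = t + s := by omega
      have hTs : T.card ≤ s := by
        have : T = Finset.Ioi tt := by
          ext j
          rw [hT, Finset.mem_filter, Finset.mem_Ioi, Fin.lt_def]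
          exact ⟨fun h => h.2, fun h => ⟨Finset.mem_univ _, h⟩⟩
        rw [this, Fin.card_Ioi]
      have hεs : ε ^ s ≤ ε := by
        calc ε ^ s ≤ ε ^ 1 := pow_le_pow_of_le_one hε.le (by linarith) hs1
        _ = ε := pow_one ε
      have h2sεs : 2 * (s : ℝ) * ε ^ s ≤ 1 := by
        have h1 : ε ^ s ≤ (1/2 : ℝ) ^ s := pow_le_pow_left₀ hε.le hε2.le s
        have h2 : (2 * s : ℕ) ≤ 2 ^ s := two_mul_le_two_pow s hs1
        have h3 : (2 * (s:ℝ)) ≤ (2:ℝ) ^ s := by exact_mod_cast h2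
        have h4 : (0:ℝ) ≤ 2 * (s:ℝ) := by positivity
        calc 2 * (s:ℝ) * ε ^ s ≤ (2:ℝ) ^ s * (1/2 : ℝ) ^ s := by
              apply mul_le_mul h3 h1 (by positivity) (by positivity)
        _ = ((2 : ℝ) * (1/2)) ^ s := by rw [mul_pow]
        _ = 1 := by norm_num
      have hc2 : ε ^ (k - 1) * (n : ℝ) / k ≤ 2 * ε ^ (k-1) * m := by
        rw [div_le_iff₀ (by exact_mod_cast hk)]
        calc ε ^ (k-1) * (n:ℝ) ≤ ε ^ (k-1) * (2 * k * m) := by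
              apply mul_le_mul_of_nonneg_left hmn (by positivity)
        _ = 2 * ε ^ (k-1) * m * k := by ring
      have hpow : (ε : ℝ) ^ (k - 1) = ε ^ t * ε ^ s := by
        rw [← pow_add, ← hksplit]
      -- B bound
      have hBsize : ε ^ (k - 1) * (n : ℝ) / k ≤ (B.card : ℝ) := by
        calc ε ^ (k - 1) * (n : ℝ) / k ≤ 2 * ε ^ (k-1) * m := hc2
        _ = 2 * ε ^ s * (ε ^ t * m) := by rw [hpow]; ring
        _ ≤ 1 * (ε ^ t * m) := by
            apply mul_le_mul_of_nonneg_right _ (by positivity)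
            nlinarith
        _ = ε ^ t * m := one_mul _
        _ ≤ (B.card : ℝ) := hsize j₀ (by omega)
      -- A bound
      have hAsize : ε ^ (k - 1) * (n : ℝ) / k ≤ (A.card : ℝ) := by
        have hTposR : (0:ℝ) < (T.card : ℝ) := by exact_mod_cast hTpos
        rw [← mul_le_mul_iff_right₀ hTposR]
        calc (T.card : ℝ) * (ε ^ (k - 1) * (n : ℝ) / k)
            ≤ (s : ℝ) * (2 * ε ^ (k-1) * m) := by
              apply mul_le_mul (by exact_mod_cast hTs) hc2 (by positivity) (by positivity)
        _ = 2 * (s:ℝ) * ε ^ s * (ε ^ t * m) := by rw [hpow]; ring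
        _ ≤ 1 * (ε ^ t * m) := by
            apply mul_le_mul_of_nonneg_right h2sεs (by positivity)
        _ = ε ^ t * m := one_mul _
        _ ≤ ((W tt).card : ℝ) := hsize tt (le_refl t)
        _ ≤ (A.card : ℝ) * (T.card : ℝ) := (div_le_iff₀ hTposR).mp hAcard
        _ = (T.card : ℝ) * (A.card : ℝ) := mul_comm _ _
      have hj₀ne : tt ≠ j₀ := by
        intro h
        rw [← h] at hj₀t
        simp [htt] at hj₀t
      have hdisAB : Disjoint A B := by
        apply (hdis tt j₀ hj₀ne).mono (Finset.filter_subset _ _) (le_refl _)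
      refine ⟨A, B, hdisAB, hAsize, hBsize, ?_⟩
      have hAprop : ∀ a ∈ A, ((S a j₀).card : ℝ) < ε * (B.card : ℝ) := by
        intro a ha
        rw [hA, Finset.mem_filter] at ha
        have := (hjf a ha.1).2
        rw [ha.2] at this
        exact this
      by_cases hH : H.Adj tt j₀
      · left
        intro a ha
        have := hAprop a ha
        rw [hS] at this
        dsimp only at this
        rw [if_pos hH] at this
        exact this.le
      · right
        intro a ha
        have h1 := hAprop a ha
        rw [hS] at h1
        dsimp only at h1
        rw [if_neg hH] at h1
        have h2 : (B.filter (G.Adj a)).card + (B.filter (fun y => ¬ G.Adj a y)).card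
            = B.card := Finset.card_filter_add_card_filter_not _
        have h3 : ((B.filter (G.Adj a)).card : ℝ)
            = (B.card : ℝ) - ((B.filter (fun y => ¬ G.Adj a y)).card : ℝ) := by
          have := h2
          push_cast [← this]
          ring
        rw [ge_iff_le, h3]
        have hBnn : (0:ℝ) ≤ (B.card : ℝ) := Nat.cast_nonneg _
        nlinarith

theorem stmt7 :
    ∀ ε : ℝ, 0 < ε → ε < 1 / 2 →
    ∀ (k : ℕ) (H : SimpleGraph (Fin k)),
    ∀ n : ℕ, 2 ≤ n →
    ∀ G : SimpleGraph (Fin n), IsEmpty (H ↪g G) →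
    ∃ A B : Finset (Fin n), Disjoint A B ∧
      (A.card : ℝ) ≥ ε ^ (k - 1) * n / k ∧
      (B.card : ℝ) ≥ ε ^ (k - 1) * n / k ∧
      ((∀ a ∈ A, ((B.filter (G.Adj a)).card : ℝ) ≤ ε * B.card) ∨
       (∀ a ∈ A, ((B.filter (G.Adj a)).card : ℝ) ≥ (1 - ε) * B.card)) := by
  intro ε hε hε2 k H n hn G hfree
  by_cases hc : ε ^ (k - 1) * n / k ≤ 1
  · -- trivial case : two singletons
    set a0 : Fin n := ⟨0, by omega⟩ with ha0
    set a1 : Fin n := ⟨1, by omega⟩ with ha1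
    have hne01 : a0 ≠ a1 := by
      intro h
      rw [ha0, ha1, Fin.mk.injEq] at h
      omega
    refine ⟨{a0}, {a1}, by rw [Finset.disjoint_singleton]; exact hne01, ?_, ?_, ?_⟩
    · simpa using hc
    · simpa using hc
    · by_cases hadj : G.Adj a0 a1
      · right
        intro a ha
        rw [Finset.mem_singleton] at ha
        subst ha
        have : ({a1} : Finset (Fin n)).filter (G.Adj a0) = {a1} := by
          rw [Finset.filter_singleton, if_pos hadj]
        rw [this]
        simp
        linarith
      · left
        intro a ha
        rw [Finset.mem_singleton] at ha
        subst ha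
        have : ({a1} : Finset (Fin n)).filter (G.Adj a0) = ∅ := by
          rw [Finset.filter_singleton, if_neg hadj]
        rw [this]
        simp
        positivity
  · push_neg at hc
    have hεk1 : ε ^ (k-1) ≤ 1 := pow_le_one₀ hε.le (by linarith)
    have hk0 : 0 < k := by
      by_contra h
      have : k = 0 := by omega
      subst this
      norm_num at hc
    have hkR : (0:ℝ) < (k:ℝ) := by exact_mod_cast hk0
    have hkn : k ≤ n := by
      by_contra h
      push_neg at h
      have hnk : (n:ℝ) < (k:ℝ) := by exact_mod_cast h
      have : ε ^ (k-1) * n / k < 1 := by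
        rw [div_lt_one hkR]
        calc ε ^ (k-1) * n ≤ 1 * n := by
              apply mul_le_mul_of_nonneg_right hεk1 (by positivity)
        _ = (n:ℝ) := one_mul _
        _ < k := hnk
      linarith
    set m : ℕ := n / k with hmdef
    have hm : 1 ≤ m := Nat.one_le_div_iff hk0 |>.mpr hkn
    have hmn : (n : ℝ) ≤ 2 * k * m := by
      have h1 : n = k * m + n % k := (Nat.div_add_mod n k).symm
      have h2 : n % k < k := Nat.mod_lt n hk0
      have h3 : k ≤ k * m := by
        calc k = k * 1 := by ring
        _ ≤ k * m := Nat.mul_le_mul_left k hm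
      have h4 : n ≤ 2 * k * m := by
        calc n = k * m + n % k := h1
        _ ≤ k * m + k := by omega
        _ ≤ k * m + k * m := by omega
        _ = 2 * k * m := by ring
      exact_mod_cast h4
    have hkm : k * m ≤ n := by
      rw [hmdef, Nat.mul_comm]
      exact Nat.div_mul_le_self n k
    -- initial partition
    have hbound : ∀ j : Fin k, ∀ x ∈ (Finset.range m).image (fun i => (j : ℕ) * m + i), x < n := by
      intro j x hx
      rw [Finset.mem_image] at hx
      obtain ⟨i, hi, rfl⟩ := hx
      have hi' : i < m := Finset.mem_range.mp hi
      have hj := j.isLt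
      calc (j : ℕ) * m + i < ((j : ℕ) + 1) * m := by
            have : ((j : ℕ) + 1) * m = (j : ℕ) * m + m := by ring
            omega
      _ ≤ k * m := Nat.mul_le_mul_right m hj
      _ ≤ n := hkm
    set W₀ : Fin k → Finset (Fin n) := fun j =>
      Finset.attachFin ((Finset.range m).image (fun i => (j : ℕ) * m + i)) (hbound j)
      with hW₀
    have hW₀card : ∀ j, (W₀ j).card = m := by
      intro j
      rw [hW₀]
      dsimp only
      rw [Finset.card_attachFin, Finset.card_image_of_injective, Finset.card_range]
      intro i i' hii'
      simp only at hii'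
      omega
    have hW₀val : ∀ (j : Fin k) (x : Fin n), x ∈ W₀ j → ((x : ℕ) / m = (j : ℕ)) := by
      intro j x hx
      rw [hW₀] at hx
      dsimp only at hx
      rw [Finset.mem_attachFin, Finset.mem_image] at hx
      obtain ⟨i, hi, hix⟩ := hx
      have hi' : i < m := Finset.mem_range.mp hi
      rw [← hix, Nat.mul_comm, Nat.mul_add_div (by omega), Nat.div_eq_of_lt hi']
      omega
    have hW₀dis : ∀ i j : Fin k, i ≠ j → Disjoint (W₀ i) (W₀ j) := by
      intro i j hij
      rw [Finset.disjoint_left]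
      intro x hxi hxj
      have h1 := hW₀val i x hxi
      have h2 := hW₀val j x hxj
      exact hij (Fin.ext (by omega))
    exact aux_main ε hε hε2 H G hfree m hm hk0 hmn k 0 (by omega) W₀ hW₀dis
      (by intro a ha; omega)
      (by intro j _; rw [hW₀card j, pow_zero, one_mul])
      (by intro a b ha; omega)
end

section
/- If a sequence of graphs (G₁, …, G_r) on a common vertex set V is (αρ/2, ρ', ε, t)-sparse and (α, ρ, ε/4, 2)-sparse, then (G₁, …, G_r) is also (α, ρρ'/2, ε, 2t)-sparse. -/
open scoped Classical

/-- `e(A,B)`: the number of pairs `(a,b) ∈ A × B` that are edges of `G`. -/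
noncomputable def pairEdges {V : Type*} (G : SimpleGraph V) (A B : Finset V) : ℕ :=
  ((A ×ˢ B).filter fun p => G.Adj p.1 p.2).card

/-- The density `d_G(W₁, …, W_t) = (Σ_{i<j} e(W_i, W_j)) / (Σ_{i<j} |W_i||W_j|)`
between the parts of an indexed family of vertex subsets; for `t = 1` both sums are
empty and the density is `0/0 = 0`. -/
noncomputable def seqDensity {V : Type*} (G : SimpleGraph V) {t : ℕ}
    (W : Fin t → Finset V) : ℝ :=
  (∑ p ∈ Finset.univ.filter (fun p : Fin t × Fin t => p.1 < p.2),
      (pairEdges G (W p.1) (W p.2) : ℝ)) /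
    (∑ p ∈ Finset.univ.filter (fun p : Fin t × Fin t => p.1 < p.2),
      ((W p.1).card : ℝ) * ((W p.2).card : ℝ))

/-- A sequence `(G 1, …, G r)` of graphs on a common vertex set `V` is
`(α, ρ, ε, t)`-sparse if for every `U ⊆ V` with `|U| ≥ α|V|` there are positive
integers `t₁, …, t_r` with `∏ tᵢ ≥ t` such that for each `i` there are disjoint
subsets `W_{i,1}, …, W_{i,tᵢ} ⊆ U`, all of size `⌈ρ|U|⌉`, with
`d_{G i}(W_{i,1}, …, W_{i,tᵢ}) ≤ ε`. -/
def IsSparse {V : Type*} [Fintype V] {r : ℕ} (G : Fin r → SimpleGraph V)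
    (α ρ ε : ℝ) (t : ℕ) : Prop :=
  ∀ U : Finset V, (U.card : ℝ) ≥ α * Fintype.card V →
    ∃ ts : Fin r → ℕ, (∀ i, 0 < ts i) ∧ t ≤ ∏ i, ts i ∧
      ∀ i : Fin r, ∃ W : Fin (ts i) → Finset V,
        (∀ a, W a ⊆ U) ∧
        (∀ a b, a ≠ b → Disjoint (W a) (W b)) ∧
        (∀ a, (W a).card = ⌈ρ * (U.card : ℝ)⌉₊) ∧
        seqDensity (G i) W ≤ ε

namespace SparseProof

open Finset

variable {V : Type*}

/-- the set of ordered index pairs -/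
def pairsF (k : ℕ) : Finset (Fin k × Fin k) :=
  (Finset.univ : Finset (Fin k × Fin k)).filter fun p => p.1 < p.2

/-- number of index pairs -/
def Np (k : ℕ) : ℕ := (pairsF k).card

noncomputable def totalE (G : SimpleGraph V) {k : ℕ} (W : Fin k → Finset V) : ℕ :=
  ∑ p ∈ pairsF k, pairEdges G (W p.1) (W p.2)

lemma pairEdges_le_mul (G : SimpleGraph V) (A B : Finset V) :
    pairEdges G A B ≤ A.card * B.card := by
  classical
  calc pairEdges G A B ≤ (A ×ˢ B).card := Finset.card_filter_le _ _
    _ = A.card * B.card := Finset.card_product A B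

lemma pairEdges_mono (G : SimpleGraph V) {A B A' B' : Finset V} (hA : A ⊆ A') (hB : B ⊆ B') :
    pairEdges G A B ≤ pairEdges G A' B' :=
  Finset.card_le_card (Finset.filter_subset_filter _ (Finset.product_subset_product hA hB))

lemma pairEdges_comm (G : SimpleGraph V) (A B : Finset V) :
    pairEdges G A B = pairEdges G B A := by
  classical
  unfold pairEdges
  apply Finset.card_bij (fun p _ => p.swap)
  · rintro ⟨x, y⟩ hp
    simp only [Finset.mem_filter, Finset.mem_product] at hp ⊢
    exact ⟨⟨hp.1.2, hp.1.1⟩, hp.2.symm⟩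
  · rintro ⟨x, y⟩ _ ⟨x', y'⟩ _ h
    simpa [Prod.ext_iff, and_comm] using (Prod.ext_iff.mp h)
  · rintro ⟨x, y⟩ hp
    refine ⟨⟨y, x⟩, ?_, rfl⟩
    simp only [Finset.mem_filter, Finset.mem_product] at hp ⊢
    exact ⟨⟨hp.1.2, hp.1.1⟩, hp.2.symm⟩

lemma seqDensity_eq (G : SimpleGraph V) {k : ℕ} (W : Fin k → Finset V) :
    seqDensity G W = (totalE G W : ℝ) /
      ∑ p ∈ pairsF k, ((W p.1).card : ℝ) * ((W p.2).card : ℝ) := by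
  rw [seqDensity, totalE]
  push_cast
  rfl

lemma denom_eq (c : ℕ) {k : ℕ} (W : Fin k → Finset V) (hc : ∀ a, (W a).card = c) :
    (∑ p ∈ pairsF k, ((W p.1).card : ℝ) * ((W p.2).card : ℝ)) = (Np k : ℝ) * (c : ℝ) ^ 2 := by
  rw [Finset.sum_congr rfl (fun p _ => by rw [hc p.1, hc p.2])]
  rw [Finset.sum_const, Np, nsmul_eq_mul]
  ring

lemma totalE_le_of_seqDensity (G : SimpleGraph V) {k : ℕ} (W : Fin k → Finset V) (c : ℕ)
    (hc : ∀ a, (W a).card = c) {x : ℝ} (hx : 0 ≤ x) (h : seqDensity G W ≤ x) :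
    (totalE G W : ℝ) ≤ x * ((Np k : ℝ) * (c : ℝ) ^ 2) := by
  rcases eq_or_lt_of_le (show (0:ℝ) ≤ (Np k : ℝ) * (c : ℝ) ^ 2 by positivity) with h0 | h0
  · -- degenerate denominator: numerator is 0
    have hT : totalE G W = 0 := by
      rcases mul_eq_zero.mp h0.symm with hnp | hcc
      · have : pairsF k = ∅ := Finset.card_eq_zero.mp (by exact_mod_cast hnp)
        rw [totalE, this, Finset.sum_empty]
      · have hc0 : c = 0 := by exact_mod_cast pow_eq_zero_iff (n := 2) (by norm_num) |>.mp hcc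
        rw [totalE]
        apply Finset.sum_eq_zero
        intro p _
        have := pairEdges_le_mul G (W p.1) (W p.2)
        rw [hc p.1, hc p.2, hc0] at this
        omega
    rw [hT]
    push_cast
    positivity
  · rw [seqDensity_eq, denom_eq c W hc] at h
    exact (div_le_iff₀ h0).mp h

lemma seqDensity_le_of_totalE (G : SimpleGraph V) {k : ℕ} (W : Fin k → Finset V) (c : ℕ)
    (hc : ∀ a, (W a).card = c) {x : ℝ} (hx : 0 ≤ x)
    (h : (totalE G W : ℝ) ≤ x * ((Np k : ℝ) * (c : ℝ) ^ 2)) :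
    seqDensity G W ≤ x := by
  rw [seqDensity_eq, denom_eq c W hc]
  rcases eq_or_lt_of_le (show (0:ℝ) ≤ (Np k : ℝ) * (c : ℝ) ^ 2 by positivity) with h0 | h0
  · rw [← h0, div_zero]; exact hx
  · rw [div_le_iff₀ h0]
    exact h

lemma exists_sparse_pair (G : SimpleGraph V) {k : ℕ} (Z : Fin k → Finset V) (hk : 2 ≤ k)
    (c : ℕ) (hc : ∀ a, (Z a).card = c) {y : ℝ} (hy : 0 ≤ y) (h : seqDensity G Z ≤ y) :
    ∃ a b : Fin k, a < b ∧ (pairEdges G (Z a) (Z b) : ℝ) ≤ y * (c : ℝ) ^ 2 := by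
  have hT := totalE_le_of_seqDensity G Z c hc hy h
  have hne : (pairsF k).Nonempty := by
    refine ⟨(⟨0, by omega⟩, ⟨1, by omega⟩), Finset.mem_filter.mpr ⟨Finset.mem_univ _, ?_⟩⟩
    exact Fin.mk_lt_mk.mpr (by norm_num)
  have hsum : (∑ p ∈ pairsF k, (pairEdges G (Z p.1) (Z p.2) : ℝ))
      ≤ ∑ _p ∈ pairsF k, y * (c : ℝ) ^ 2 := by
    rw [Finset.sum_const, nsmul_eq_mul]
    calc (∑ p ∈ pairsF k, (pairEdges G (Z p.1) (Z p.2) : ℝ)) = ((totalE G Z : ℕ) : ℝ) := by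
          rw [totalE]; push_cast; rfl
      _ ≤ y * ((Np k : ℝ) * (c:ℝ)^2) := hT
      _ = (pairsF k).card * (y * (c:ℝ)^2) := by rw [Np]; ring
  obtain ⟨p, hp, hple⟩ := Finset.exists_le_of_sum_le hne hsum
  exact ⟨p.1, p.2, (Finset.mem_filter.mp hp).2, hple⟩

lemma totalE_eq_double (G : SimpleGraph V) {k : ℕ} (W : Fin k → Finset V) :
    totalE G W = ∑ p : Fin k, ∑ q : Fin k, if p < q then pairEdges G (W p) (W q) else 0 := by
  rw [totalE, pairsF, Finset.sum_filter, ← Finset.univ_product_univ, Finset.sum_product]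

lemma Np_eq_double (k : ℕ) :
    Np k = ∑ p : Fin k, ∑ q : Fin k, if p < q then 1 else 0 := by
  rw [Np, Finset.card_eq_sum_ones, pairsF, Finset.sum_filter, ← Finset.univ_product_univ,
    Finset.sum_product]

/-- splitting a `<`-pairs double sum over `Fin (a+b)` into three groups -/
lemma double_split {M : Type*} [AddCommMonoid M] (a b : ℕ) (f : Fin (a+b) → Fin (a+b) → M) :
    (∑ p : Fin (a+b), ∑ q : Fin (a+b), if p < q then f p q else 0)
      = (∑ p : Fin a, ∑ q : Fin a, if p < q then f (Fin.castAdd b p) (Fin.castAdd b q) else 0)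
        + (∑ p : Fin b, ∑ q : Fin b, if p < q then f (Fin.natAdd a p) (Fin.natAdd a q) else 0)
        + ∑ p : Fin a, ∑ q : Fin b, f (Fin.castAdd b p) (Fin.natAdd a q) := by
  rw [Fin.sum_univ_add (f := fun p => ∑ q : Fin (a+b), if p < q then f p q else 0)]
  have hL : ∀ p : Fin a, (∑ q : Fin (a+b), if Fin.castAdd b p < q then f (Fin.castAdd b p) q else 0)
      = (∑ q : Fin a, if p < q then f (Fin.castAdd b p) (Fin.castAdd b q) else 0)
        + ∑ q : Fin b, f (Fin.castAdd b p) (Fin.natAdd a q) := by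
    intro p
    rw [Fin.sum_univ_add (f := fun q => if Fin.castAdd b p < q then f (Fin.castAdd b p) q else 0)]
    have e1 : (∑ q : Fin a, if Fin.castAdd b p < Fin.castAdd b q then f (Fin.castAdd b p) (Fin.castAdd b q) else 0)
        = ∑ q : Fin a, if p < q then f (Fin.castAdd b p) (Fin.castAdd b q) else 0 :=
      Finset.sum_congr rfl fun q _ => if_congr (by simp only [Fin.lt_def, Fin.coe_castAdd]) rfl rfl
    have e2 : (∑ q : Fin b, if Fin.castAdd b p < Fin.natAdd a q then f (Fin.castAdd b p) (Fin.natAdd a q) else 0)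
        = ∑ q : Fin b, f (Fin.castAdd b p) (Fin.natAdd a q) :=
      Finset.sum_congr rfl fun q _ => if_pos (by
        simp only [Fin.lt_def, Fin.coe_castAdd, Fin.coe_natAdd]
        exact lt_of_lt_of_le p.isLt (Nat.le_add_right _ _))
    rw [e1, e2]
  have hR : ∀ p : Fin b, (∑ q : Fin (a+b), if Fin.natAdd a p < q then f (Fin.natAdd a p) q else 0)
      = ∑ q : Fin b, if p < q then f (Fin.natAdd a p) (Fin.natAdd a q) else 0 := by
    intro p
    rw [Fin.sum_univ_add (f := fun q => if Fin.natAdd a p < q then f (Fin.natAdd a p) q else 0)]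
    have h0 : (∑ q : Fin a, if Fin.natAdd a p < Fin.castAdd b q then f (Fin.natAdd a p) (Fin.castAdd b q) else 0) = 0 := by
      apply Finset.sum_eq_zero
      intro q _
      apply if_neg
      simp only [Fin.lt_def, Fin.coe_castAdd, Fin.coe_natAdd]
      omega
    rw [h0, zero_add]
    exact Finset.sum_congr rfl fun q _ => by
      simp only [Fin.lt_def, Fin.coe_natAdd, Nat.add_lt_add_iff_left]
  rw [Finset.sum_congr rfl (fun p _ => hL p), Finset.sum_congr rfl (fun p _ => hR p),
    Finset.sum_add_distrib]
  abel

lemma totalE_append (G : SimpleGraph V) {a b : ℕ} (F : Fin a → Finset V) (Gf : Fin b → Finset V) :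
    totalE G (Fin.addCases F Gf) = totalE G F + totalE G Gf
      + ∑ p : Fin a, ∑ q : Fin b, pairEdges G (F p) (Gf q) := by
  rw [totalE_eq_double, double_split, totalE_eq_double, totalE_eq_double]
  simp only [Fin.addCases_left, Fin.addCases_right]

lemma Np_add (a b : ℕ) : Np (a + b) = Np a + Np b + a * b := by
  rw [Np_eq_double, double_split, ← Np_eq_double, ← Np_eq_double]
  congr 1
  simp [Finset.sum_const, mul_comm]

/-- cross edges between two disjoint collections are at most the edges between ambient sets -/
lemma sum_pairEdges_le {ι κ : Type*} [Fintype ι] [Fintype κ] (G : SimpleGraph V)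
    (A : ι → Finset V) (B : κ → Finset V) (U₁ U₂ : Finset V)
    (hA : ∀ i, A i ⊆ U₁) (hB : ∀ j, B j ⊆ U₂)
    (hdA : ∀ i i', i ≠ i' → Disjoint (A i) (A i'))
    (hdB : ∀ j j', j ≠ j' → Disjoint (B j) (B j')) :
    (∑ i, ∑ j, pairEdges G (A i) (B j)) ≤ pairEdges G U₁ U₂ := by
  classical
  have key : ∀ s t s' t' : Finset V, Disjoint s s' ∨ Disjoint t t' →
      Disjoint (s ×ˢ t) (s' ×ˢ t') := by
    intro s t s' t' h
    rw [Finset.disjoint_left]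
    rintro ⟨x, y⟩ hp hp'
    rw [Finset.mem_product] at hp hp'
    rcases h with h | h
    · exact Finset.disjoint_left.mp h hp.1 hp'.1
    · exact Finset.disjoint_left.mp h hp.2 hp'.2
  have hdisj : ∀ p ∈ (Finset.univ : Finset (ι × κ)), ∀ q ∈ (Finset.univ : Finset (ι × κ)),
      p ≠ q → Disjoint ((A p.1 ×ˢ B p.2).filter fun z => G.Adj z.1 z.2)
        ((A q.1 ×ˢ B q.2).filter fun z => G.Adj z.1 z.2) := by
    rintro p - q - hpq
    apply Finset.disjoint_filter_filter
    apply key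
    rcases eq_or_ne p.1 q.1 with h1 | h1
    · right
      apply hdB
      intro h2
      exact hpq (Prod.ext h1 h2)
    · exact Or.inl (hdA _ _ h1)
  calc (∑ i, ∑ j, pairEdges G (A i) (B j))
      = ∑ p : ι × κ, pairEdges G (A p.1) (B p.2) := by
        rw [← Finset.univ_product_univ, Finset.sum_product]
    _ = ((Finset.univ : Finset (ι × κ)).biUnion
          (fun p => (A p.1 ×ˢ B p.2).filter fun z => G.Adj z.1 z.2)).card := by
        rw [Finset.card_biUnion hdisj]; rfl
    _ ≤ pairEdges G U₁ U₂ := by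
        apply Finset.card_le_card
        rw [Finset.biUnion_subset]
        intro p _
        exact Finset.filter_subset_filter _ (Finset.product_subset_product (hA p.1) (hB p.2))

lemma pairEdges_erase_right (G : SimpleGraph V) (A B : Finset V) (x : V) :
    pairEdges G A (B.erase x)
      = (((A ×ˢ B).filter fun p => G.Adj p.1 p.2).filter fun p => p.2 ≠ x).card := by
  classical
  unfold pairEdges
  congr 1
  ext p
  simp only [Finset.mem_filter, Finset.mem_product, Finset.mem_erase]
  tauto

lemma sum_pairEdges_erase_right (G : SimpleGraph V) (A B : Finset V) {c : ℕ}
    (hB : B.card = c + 1) :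
    ∑ x ∈ B, pairEdges G A (B.erase x) = c * pairEdges G A B := by
  classical
  have h1 : ∀ x ∈ B, pairEdges G A (B.erase x)
      = ∑ p ∈ (A ×ˢ B).filter (fun p => G.Adj p.1 p.2), if p.2 ≠ x then 1 else 0 := by
    intro x _
    rw [pairEdges_erase_right, Finset.card_filter]
  rw [Finset.sum_congr rfl h1, Finset.sum_comm]
  have h2 : ∀ p ∈ (A ×ˢ B).filter (fun p => G.Adj p.1 p.2),
      (∑ x ∈ B, if p.2 ≠ x then 1 else 0) = c := by
    intro p hp
    have hpB : p.2 ∈ B := (Finset.mem_product.mp (Finset.mem_filter.mp hp).1).2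
    have : (∑ x ∈ B, if p.2 ≠ x then 1 else 0) = (B.filter fun x => p.2 ≠ x).card := by
      rw [Finset.card_filter]
    rw [this]
    have : (B.filter fun x => p.2 ≠ x) = B.erase p.2 := by
      ext y
      simp only [Finset.mem_filter, Finset.mem_erase]
      tauto
    rw [this, Finset.card_erase_of_mem hpB, hB]
    omega
  rw [Finset.sum_congr rfl h2, Finset.sum_const, smul_eq_mul, mul_comm]
  rfl

lemma sum_pairEdges_erase_left (G : SimpleGraph V) (A B : Finset V) {c : ℕ}
    (hA : A.card = c + 1) :
    ∑ x ∈ A, pairEdges G (A.erase x) B = c * pairEdges G A B := by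
  classical
  calc ∑ x ∈ A, pairEdges G (A.erase x) B = ∑ x ∈ A, pairEdges G B (A.erase x) := by
        exact Finset.sum_congr rfl fun x _ => pairEdges_comm G _ _
    _ = c * pairEdges G B A := sum_pairEdges_erase_right G B A hA
    _ = c * pairEdges G A B := by rw [pairEdges_comm]

/-- weighted pair sum -/
noncomputable def wsum (G' : SimpleGraph V) {k : ℕ} (X : Fin k → Finset V) (ω : Fin k → ℝ) : ℝ :=
  ∑ p : Fin k, ∑ q : Fin k,
    if p < q then ω p * ω q * (pairEdges G' (X p) (X q) : ℝ) else 0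

lemma wsum_const (G' : SimpleGraph V) {k : ℕ} (X : Fin k → Finset V) (c : ℝ)
    (ω : Fin k → ℝ) (hω : ∀ a, ω a = c) :
    wsum G' X ω = c ^ 2 * (totalE G' X : ℝ) := by
  rw [wsum, totalE_eq_double]
  push_cast
  rw [Finset.mul_sum]
  refine Finset.sum_congr rfl fun p _ => ?_
  rw [Finset.mul_sum]
  refine Finset.sum_congr rfl fun q _ => ?_
  by_cases h : p < q
  · rw [if_pos h, if_pos h, hω p, hω q]; ring
  · rw [if_neg h, if_neg h, mul_zero]

lemma double_split_j {k : ℕ} (j : Fin k) (g : Fin k → Fin k → ℝ) :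
    (∑ p : Fin k, ∑ q : Fin k, if p < q then g p q else 0)
    = (∑ p ∈ Finset.univ.erase j, ∑ q ∈ Finset.univ.erase j, if p < q then g p q else 0)
      + ((∑ q ∈ Finset.univ.erase j, if j < q then g j q else 0)
         + ∑ p ∈ Finset.univ.erase j, if p < j then g p j else 0) := by
  classical
  set E := Finset.univ.erase j with hE
  have hjE : j ∉ E := Finset.notMem_erase j _
  have huniv : (Finset.univ : Finset (Fin k)) = insert j E := by
    rw [hE, Finset.insert_erase (Finset.mem_univ j)]
  have hinner : ∀ p : Fin k, (∑ q : Fin k, if p < q then g p q else 0)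
      = (if p < j then g p j else 0) + ∑ q ∈ E, if p < q then g p q else 0 := by
    intro p
    rw [show (∑ q : Fin k, if p < q then g p q else 0)
        = ∑ q ∈ insert j E, (if p < q then g p q else 0) from by rw [← huniv],
      Finset.sum_insert hjE]
  calc (∑ p : Fin k, ∑ q : Fin k, if p < q then g p q else 0)
      = ∑ p ∈ insert j E, ((if p < j then g p j else 0) + ∑ q ∈ E, if p < q then g p q else 0) := by
        rw [← huniv]; exact Finset.sum_congr rfl fun p _ => hinner p
    _ = ((if j < j then g j j else 0) + ∑ q ∈ E, if j < q then g j q else 0)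
        + ∑ p ∈ E, ((if p < j then g p j else 0) + ∑ q ∈ E, if p < q then g p q else 0) :=
        Finset.sum_insert hjE
    _ = _ := by rw [if_neg (lt_irrefl j), Finset.sum_add_distrib]; abel

def wtS {k : ℕ} (S : Finset (Fin k)) (c : ℕ) : Fin k → ℝ :=
  fun a => if a ∈ S then (c : ℝ) + 1 else (c : ℝ)

lemma shrink_aux (G' : SimpleGraph V) {k : ℕ} (X : Fin k → Finset V) (c : ℕ)
    (hc : ∀ a, (X a).card = c + 1) (S : Finset (Fin k)) :
    ∃ X' : Fin k → Finset V, (∀ a, a ∉ S → X' a = X a)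
      ∧ (∀ a ∈ S, X' a ⊆ X a ∧ (X' a).card = c)
      ∧ wsum G' X' (wtS S c) ≤ (c : ℝ) ^ 2 * (totalE G' X : ℝ) := by
  classical
  induction S using Finset.induction_on with
  | empty =>
      refine ⟨X, fun a _ => rfl, by simp, le_of_eq ?_⟩
      rw [wsum_const G' X ((c : ℝ)) _ (fun a => by simp [wtS])]
  | @insert j S hj IH =>
      obtain ⟨X'', hoff, hon, hbound⟩ := IH
      have hXj : X'' j = X j := hoff j hj
      have hXjcard : (X j).card = c + 1 := hc j
      have hXjne : (X j).Nonempty := Finset.card_pos.mp (by omega)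
      -- choose the vertex to delete
      set ω := wtS S c with hω
      have herase_q : ∀ q : Fin k,
          ((∑ x ∈ X j, (pairEdges G' ((X j).erase x) (X'' q) : ℝ)))
            = (c : ℝ) * (pairEdges G' (X j) (X'' q) : ℝ) := by
        intro q
        have := sum_pairEdges_erase_left G' (X j) (X'' q) hXjcard
        exact_mod_cast congrArg (Nat.cast : ℕ → ℝ) this
      have herase_p : ∀ p : Fin k,
          ((∑ x ∈ X j, (pairEdges G' (X'' p) ((X j).erase x) : ℝ)))
            = (c : ℝ) * (pairEdges G' (X'' p) (X j) : ℝ) := by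
        intro p
        have := sum_pairEdges_erase_right G' (X'' p) (X j) hXjcard
        exact_mod_cast congrArg (Nat.cast : ℕ → ℝ) this
      have hchoice : ∃ x ∈ X j,
          ((∑ q ∈ Finset.univ.erase j, if j < q then ((c:ℝ)+1) * ω q * (pairEdges G' ((X j).erase x) (X'' q) : ℝ) else 0)
            + ∑ p ∈ Finset.univ.erase j, if p < j then ω p * ((c:ℝ)+1) * (pairEdges G' (X'' p) ((X j).erase x) : ℝ) else 0)
          ≤ ((∑ q ∈ Finset.univ.erase j, if j < q then (c:ℝ) * ω q * (pairEdges G' (X j) (X'' q) : ℝ) else 0)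
            + ∑ p ∈ Finset.univ.erase j, if p < j then ω p * (c:ℝ) * (pairEdges G' (X'' p) (X j) : ℝ) else 0) := by
        apply Finset.exists_le_of_sum_le hXjne
        have hA : (∑ x ∈ X j, ∑ q ∈ Finset.univ.erase j,
            if j < q then ((c:ℝ)+1) * ω q * (pairEdges G' ((X j).erase x) (X'' q) : ℝ) else 0)
            = ((c:ℝ)+1) * ∑ q ∈ Finset.univ.erase j,
                if j < q then (c:ℝ) * ω q * (pairEdges G' (X j) (X'' q) : ℝ) else 0 := by
          rw [Finset.sum_comm, Finset.mul_sum]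
          refine Finset.sum_congr rfl fun q _ => ?_
          by_cases h : j < q
          · simp only [if_pos h]
            rw [← Finset.mul_sum, herase_q q]
            ring
          · simp [h]
        have hB : (∑ x ∈ X j, ∑ p ∈ Finset.univ.erase j,
            if p < j then ω p * ((c:ℝ)+1) * (pairEdges G' (X'' p) ((X j).erase x) : ℝ) else 0)
            = ((c:ℝ)+1) * ∑ p ∈ Finset.univ.erase j,
                if p < j then ω p * (c:ℝ) * (pairEdges G' (X'' p) (X j) : ℝ) else 0 := by
          rw [Finset.sum_comm, Finset.mul_sum]
          refine Finset.sum_congr rfl fun p _ => ?_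
          by_cases h : p < j
          · simp only [if_pos h]
            rw [← Finset.mul_sum, herase_p p]
            ring
          · simp [h]
        rw [Finset.sum_add_distrib, hA, hB, Finset.sum_const, hXjcard, nsmul_eq_mul]
        push_cast
        exact le_of_eq (by ring)
      obtain ⟨x, hxmem, hkey⟩ := hchoice
      refine ⟨Function.update X'' j ((X j).erase x), ?_, ?_, ?_⟩
      · intro a ha
        have haj : a ≠ j := fun h => ha (h ▸ Finset.mem_insert_self j S)
        have haS : a ∉ S := fun h => ha (Finset.mem_insert_of_mem h)
        rw [Function.update_of_ne haj, hoff a haS]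
      · intro a ha
        rcases Finset.mem_insert.mp ha with h | h
        · subst h
          rw [Function.update_self]
          exact ⟨Finset.erase_subset _ _, by rw [Finset.card_erase_of_mem hxmem, hXjcard]; omega⟩
        · have haj : a ≠ j := fun hh => hj (hh ▸ h)
          rw [Function.update_of_ne haj]
          exact hon a h
      · -- the weighted sum inequality
        refine le_trans ?_ hbound
        rw [wsum, wsum, double_split_j j, double_split_j j]
        have hrest : (∑ p ∈ Finset.univ.erase j, ∑ q ∈ Finset.univ.erase j,
            if p < q then wtS (insert j S) c p * wtS (insert j S) c q *
              (pairEdges G' (Function.update X'' j ((X j).erase x) p)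
                (Function.update X'' j ((X j).erase x) q) : ℝ) else 0)
            = ∑ p ∈ Finset.univ.erase j, ∑ q ∈ Finset.univ.erase j,
              if p < q then ω p * ω q * (pairEdges G' (X'' p) (X'' q) : ℝ) else 0 := by
        -- same terms off j
          refine Finset.sum_congr rfl fun p hp => Finset.sum_congr rfl fun q hq => ?_
          have hpj : p ≠ j := Finset.ne_of_mem_erase hp
          have hqj : q ≠ j := Finset.ne_of_mem_erase hq
          rw [Function.update_of_ne hpj, Function.update_of_ne hqj]
          rw [show wtS (insert j S) c p = ω p by simp [wtS, hω, Finset.mem_insert, hpj]]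
          rw [show wtS (insert j S) c q = ω q by simp [wtS, hω, Finset.mem_insert, hqj]]
        rw [hrest]
        apply add_le_add le_rfl
        -- j-terms
        have e1 : ∀ q ∈ Finset.univ.erase j, (if j < q then wtS (insert j S) c j * wtS (insert j S) c q *
              (pairEdges G' (Function.update X'' j ((X j).erase x) j)
                (Function.update X'' j ((X j).erase x) q) : ℝ) else 0)
            = (if j < q then ((c:ℝ)+1) * ω q * (pairEdges G' ((X j).erase x) (X'' q) : ℝ) else 0) := by
          intro q hq
          have hqj : q ≠ j := Finset.ne_of_mem_erase hq
          rw [Function.update_self, Function.update_of_ne hqj]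
          rw [show wtS (insert j S) c j = (c:ℝ)+1 by simp [wtS]]
          rw [show wtS (insert j S) c q = ω q by simp [wtS, hω, Finset.mem_insert, hqj]]
        have e2 : ∀ p ∈ Finset.univ.erase j, (if p < j then wtS (insert j S) c p * wtS (insert j S) c j *
              (pairEdges G' (Function.update X'' j ((X j).erase x) p)
                (Function.update X'' j ((X j).erase x) j) : ℝ) else 0)
            = (if p < j then ω p * ((c:ℝ)+1) * (pairEdges G' (X'' p) ((X j).erase x) : ℝ) else 0) := by
          intro p hp
          have hpj : p ≠ j := Finset.ne_of_mem_erase hp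
          rw [Function.update_self, Function.update_of_ne hpj]
          rw [show wtS (insert j S) c j = (c:ℝ)+1 by simp [wtS]]
          rw [show wtS (insert j S) c p = ω p by simp [wtS, hω, Finset.mem_insert, hpj]]
        have e3 : ∀ q ∈ Finset.univ.erase j, (if j < q then ω j * ω q *
              (pairEdges G' (X'' j) (X'' q) : ℝ) else 0)
            = (if j < q then (c:ℝ) * ω q * (pairEdges G' (X j) (X'' q) : ℝ) else 0) := by
          intro q _
          rw [hXj, show ω j = (c:ℝ) by simp [hω, wtS, hj]]
        have e4 : ∀ p ∈ Finset.univ.erase j, (if p < j then ω p * ω j *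
              (pairEdges G' (X'' p) (X'' j) : ℝ) else 0)
            = (if p < j then ω p * (c:ℝ) * (pairEdges G' (X'' p) (X j) : ℝ) else 0) := by
          intro p _
          rw [hXj, show ω j = (c:ℝ) by simp [hω, wtS, hj]]
        rw [Finset.sum_congr rfl e1, Finset.sum_congr rfl e2,
          Finset.sum_congr rfl e3, Finset.sum_congr rfl e4]
        exact hkey

lemma shrink (G' : SimpleGraph V) {k : ℕ} (X : Fin k → Finset V) (c : ℕ)
    (hc : ∀ a, (X a).card = c + 1) :
    ∃ X' : Fin k → Finset V, (∀ a, X' a ⊆ X a) ∧ (∀ a, (X' a).card = c)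
      ∧ ((c : ℝ) + 1) ^ 2 * (totalE G' X' : ℝ) ≤ (c : ℝ) ^ 2 * (totalE G' X : ℝ) := by
  obtain ⟨X', hoff, hon, hbound⟩ := shrink_aux G' X c hc Finset.univ
  refine ⟨X', fun a => (hon a (Finset.mem_univ a)).1, fun a => (hon a (Finset.mem_univ a)).2, ?_⟩
  rw [← wsum_const G' X' ((c : ℝ) + 1) (wtS Finset.univ c) (fun a => by simp [wtS])]
  exact hbound

lemma shrink_to (G' : SimpleGraph V) {k : ℕ} (X : Fin k → Finset V) {σ s : ℕ}
    (hσ : σ = s ∨ σ = s + 1) (hc : ∀ a, (X a).card = σ) {C : ℝ} (hC : 0 ≤ C)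
    (hT : (totalE G' X : ℝ) ≤ C * (σ : ℝ) ^ 2) :
    ∃ X' : Fin k → Finset V, (∀ a, X' a ⊆ X a) ∧ (∀ a, (X' a).card = s)
      ∧ ((totalE G' X' : ℝ) ≤ C * (s : ℝ) ^ 2) := by
  rcases hσ with h | h
  · subst h; exact ⟨X, fun a => subset_rfl, hc, hT⟩
  · subst h
    obtain ⟨X', hsub, hcard, hbound⟩ := shrink G' X s hc
    refine ⟨X', hsub, hcard, ?_⟩
    have hpos : (0:ℝ) < ((s:ℝ) + 1) ^ 2 := by positivity
    have hT' : (totalE G' X : ℝ) ≤ C * ((s:ℝ) + 1) ^ 2 := by push_cast at hT ⊢; convert hT using 2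
    have h2 : ((s:ℝ)+1)^2 * (totalE G' X' : ℝ) ≤ ((s:ℝ)+1)^2 * (C * (s:ℝ)^2) := by
      calc ((s:ℝ)+1)^2 * (totalE G' X' : ℝ) ≤ (s:ℝ)^2 * (totalE G' X : ℝ) := hbound
        _ ≤ (s:ℝ)^2 * (C * ((s:ℝ)+1)^2) := by
            exact mul_le_mul_of_nonneg_left hT' (by positivity)
        _ = ((s:ℝ)+1)^2 * (C * (s:ℝ)^2) := by ring
    exact le_of_mul_le_mul_left h2 hpos

/-- an "object": a system of families, one for each graph index -/
def ObjT (V : Type*) (r : ℕ) := Σ ts : Fin r → ℕ, ∀ i, Fin (ts i) → Finset V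

noncomputable def unionO {r : ℕ} (i₀ : Fin r) (o : ObjT V r) : Finset V :=
  Finset.univ.biUnion (o.2 i₀)

lemma extract {r : ℕ} (i₀ : Fin r) (σ w : ℕ) (hσ : 0 < σ) (hw : 0 < w)
    (Uside : Finset V) (Good : ObjT V r → Prop)
    (happ : ∀ W : Finset V, W ⊆ Uside → W.card = w →
      ∃ o : ObjT V r, Good o ∧ (0 < o.1 i₀) ∧ (∀ j, o.2 i₀ j ⊆ W)
        ∧ (∀ j j', j ≠ j' → Disjoint (o.2 i₀ j) (o.2 i₀ j'))
        ∧ (∀ j, (o.2 i₀ j).card = σ)) :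
    ∀ (N : ℕ) (R : Finset V), R.card ≤ N → R ⊆ Uside →
      ∃ (P : ℕ) (O : Fin P → ObjT V r),
        (∀ p, Good (O p)) ∧ (∀ p, unionO i₀ (O p) ⊆ R)
        ∧ (∀ p q, p ≠ q → Disjoint (unionO i₀ (O p)) (unionO i₀ (O q)))
        ∧ R.card < w + ∑ p, ((O p).1 i₀) * σ := by
  classical
  intro N
  induction N with
  | zero =>
      intro R hR _
      refine ⟨0, Fin.elim0, fun p => p.elim0, fun p => p.elim0, fun p => p.elim0, ?_⟩
      have h0 : R.card = 0 := Nat.le_zero.mp hR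
      simp only [Finset.univ_eq_empty, Finset.sum_empty, add_zero, h0]
      exact hw
  | succ N IH =>
      intro R hR hRsub
      by_cases hcard : R.card < w
      · refine ⟨0, Fin.elim0, fun p => p.elim0, fun p => p.elim0, fun p => p.elim0, ?_⟩
        simp only [Finset.univ_eq_empty, Finset.sum_empty, add_zero]
        exact hcard
      · push_neg at hcard
        obtain ⟨W, hWsub, hWcard⟩ := Finset.exists_subset_card_eq hcard
        obtain ⟨o, hGood, hpos, hjsub, hjdisj, hjcard⟩ :=
          happ W (hWsub.trans hRsub) hWcard
        have hUcard : (unionO i₀ o).card = (o.1 i₀) * σ := by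
          rw [unionO, Finset.card_biUnion (fun j _ j' _ hjj => hjdisj j j' hjj)]
          rw [Finset.sum_congr rfl (fun j _ => hjcard j), Finset.sum_const, smul_eq_mul,
            Finset.card_univ, Fintype.card_fin]
        have hUsub : unionO i₀ o ⊆ R := by
          rw [unionO, Finset.biUnion_subset]
          intro j _
          exact (hjsub j).trans hWsub
        have hUpos : 0 < (unionO i₀ o).card := by
          rw [hUcard]; exact Nat.mul_pos hpos hσ
        have hR' : (R \ unionO i₀ o).card ≤ N := by
          rw [Finset.card_sdiff_of_subset hUsub]
          omega
        obtain ⟨P, O, hO1, hO2, hO3, hO4⟩ :=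
          IH (R \ unionO i₀ o) hR' ((Finset.sdiff_subset).trans hRsub)
        have key : ∀ q : Fin P, Disjoint (unionO i₀ o) (unionO i₀ (O q)) := by
          intro q
          exact (Finset.sdiff_disjoint.mono_left (hO2 q)).symm
        refine ⟨P + 1, Fin.cons o O, ?_, ?_, ?_, ?_⟩
        · intro p
          refine Fin.cases ?_ ?_ p
          · exact hGood
          · intro q; exact hO1 q
        · intro p
          refine Fin.cases ?_ ?_ p
          · exact hUsub
          · intro q
            simpa using (hO2 q).trans (Finset.sdiff_subset)
        · intro p q hpq
          rcases Fin.eq_zero_or_eq_succ p with hp | ⟨p', hp⟩ <;>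
            rcases Fin.eq_zero_or_eq_succ q with hq | ⟨q', hq⟩ <;> subst hp <;> subst hq
          · exact absurd rfl hpq
          · simpa using key q'
          · simpa using (key p').symm
          · have hne : p' ≠ q' := fun h => hpq (by rw [h])
            simpa using hO3 p' q' hne
        · have hsum : (∑ p : Fin (P+1), ((Fin.cons o O : Fin (P+1) → ObjT V r) p).1 i₀ * σ)
              = o.1 i₀ * σ + ∑ p : Fin P, (O p).1 i₀ * σ := by
            rw [Fin.sum_univ_succ]
            simp [Fin.cons_zero, Fin.cons_succ]
          have h5 := Finset.card_le_card hUsub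
          have h6 : (R \ unionO i₀ o).card = R.card - o.1 i₀ * σ := by
            rw [Finset.card_sdiff_of_subset hUsub, hUcard]
          rw [hUcard] at h5
          rw [hsum]
          omega

lemma assemble {V : Type*} {r : ℕ} (G : Fin r → SimpleGraph V) (ε : ℝ) (hε0 : 0 ≤ ε)
    (i₀ : Fin r) (t s σ : ℕ) (hσor : σ = s ∨ σ = s + 1) (U : Finset V)
    (sysM : ObjT V r)
    (hpos : ∀ i, 0 < sysM.1 i) (hprod : t ≤ ∏ i, sysM.1 i)
    (hsys : ∀ i, (∀ j, sysM.2 i j ⊆ U)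
      ∧ (∀ j j', j ≠ j' → Disjoint (sysM.2 i j) (sysM.2 i j'))
      ∧ (∀ j, (sysM.2 i j).card = σ)
      ∧ ((totalE (G i) (sysM.2 i) : ℝ) ≤ ε * ((Np (sysM.1 i) : ℝ) * (σ:ℝ)^2)))
    (b : ℕ) (hab : sysM.1 i₀ ≤ b) (Gf : Fin b → Finset V)
    (hGfU : ∀ j, Gf j ⊆ U) (hGfdisj : ∀ j j', j ≠ j' → Disjoint (Gf j) (Gf j'))
    (hGfcard : ∀ j, (Gf j).card = σ)
    (hGfT : (totalE (G i₀) Gf : ℝ) ≤ ε * ((Np b : ℝ) * (σ:ℝ)^2))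
    (hFGdisj : ∀ jx jy, Disjoint (sysM.2 i₀ jx) (Gf jy))
    (hcross : (∑ jx, ∑ jy, (pairEdges (G i₀) (sysM.2 i₀ jx) (Gf jy) : ℝ))
        ≤ ε * (sysM.1 i₀ : ℝ) * (b : ℝ) * (σ:ℝ)^2) :
    ∃ ts' : Fin r → ℕ, (∀ i, 0 < ts' i) ∧ 2 * t ≤ ∏ i, ts' i ∧
      ∀ i : Fin r, ∃ W : Fin (ts' i) → Finset V,
        (∀ x, W x ⊆ U) ∧ (∀ x y, x ≠ y → Disjoint (W x) (W y)) ∧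
        (∀ x, (W x).card = s) ∧ seqDensity (G i) W ≤ ε := by
  classical
  refine ⟨Function.update sysM.1 i₀ (sysM.1 i₀ + b), ?_, ?_, ?_⟩
  · intro i
    rcases eq_or_ne i i₀ with h | h
    · rw [h, Function.update_self]; have := hpos i₀; omega
    · rw [Function.update_of_ne h]; exact hpos i
  · have e1 : (∏ i, Function.update sysM.1 i₀ (sysM.1 i₀ + b) i)
        = (∏ i ∈ Finset.univ.erase i₀, sysM.1 i) * (sysM.1 i₀ + b) := by
      rw [← Finset.prod_erase_mul _ _ (Finset.mem_univ i₀), Function.update_self]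
      congr 1
      exact Finset.prod_congr rfl fun i hi =>
        Function.update_of_ne (Finset.ne_of_mem_erase hi) _ _
    have e2 : (∏ i ∈ Finset.univ.erase i₀, sysM.1 i) * sysM.1 i₀ = ∏ i, sysM.1 i :=
      Finset.prod_erase_mul _ _ (Finset.mem_univ i₀)
    rw [e1]
    have h3 : t ≤ (∏ i ∈ Finset.univ.erase i₀, sysM.1 i) * sysM.1 i₀ := by rw [e2]; exact hprod
    calc 2 * t ≤ 2 * ((∏ i ∈ Finset.univ.erase i₀, sysM.1 i) * sysM.1 i₀) :=
          Nat.mul_le_mul_left 2 h3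
      _ = (∏ i ∈ Finset.univ.erase i₀, sysM.1 i) * (2 * sysM.1 i₀) := by ring
      _ ≤ (∏ i ∈ Finset.univ.erase i₀, sysM.1 i) * (sysM.1 i₀ + b) :=
          Nat.mul_le_mul_left _ (by omega)
  · intro i
    rcases eq_or_ne i i₀ with h | h
    · rw [h, Function.update_self]
      have hHcard : ∀ x : Fin (sysM.1 i₀ + b),
          ((Fin.addCases (sysM.2 i₀) Gf x : Finset V)).card = σ := by
        refine Fin.addCases ?_ ?_
        · intro j; rw [Fin.addCases_left]; exact (hsys i₀).2.2.1 j
        · intro j; rw [Fin.addCases_right]; exact hGfcard j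
      have hHT : (totalE (G i₀) (Fin.addCases (sysM.2 i₀) Gf : Fin (sysM.1 i₀ + b) → Finset V) : ℝ)
          ≤ (ε * (Np (sysM.1 i₀ + b) : ℝ)) * (σ:ℝ)^2 := by
        rw [totalE_append]
        push_cast
        have hT1 := (hsys i₀).2.2.2
        have hNp : ((Np (sysM.1 i₀ + b) : ℕ) : ℝ)
            = (Np (sysM.1 i₀) : ℝ) + (Np b : ℝ) + (sysM.1 i₀ : ℝ) * (b : ℝ) := by
          rw [Np_add]; push_cast; ring
        rw [hNp]
        have hadd := add_le_add (add_le_add hT1 hGfT) hcross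
        refine le_trans hadd (le_of_eq (by ring))
      obtain ⟨H', hH'sub, hH'card, hH'T⟩ := shrink_to (G i₀)
        (Fin.addCases (sysM.2 i₀) Gf) hσor hHcard
        (C := ε * (Np (sysM.1 i₀ + b) : ℝ)) (by positivity) hHT
      have hHdisj : ∀ x y : Fin (sysM.1 i₀ + b), x ≠ y →
          Disjoint (Fin.addCases (sysM.2 i₀) Gf x : Finset V)
            (Fin.addCases (sysM.2 i₀) Gf y : Finset V) := by
        refine Fin.addCases ?_ ?_
        · intro jx
          refine Fin.addCases ?_ ?_
          · intro jy hne
            rw [Fin.addCases_left, Fin.addCases_left]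
            exact (hsys i₀).2.1 jx jy (fun hje => hne (by rw [hje]))
          · intro jy _
            rw [Fin.addCases_left, Fin.addCases_right]
            exact hFGdisj jx jy
        · intro jx
          refine Fin.addCases ?_ ?_
          · intro jy _
            rw [Fin.addCases_right, Fin.addCases_left]
            exact (hFGdisj jy jx).symm
          · intro jy hne
            rw [Fin.addCases_right, Fin.addCases_right]
            exact hGfdisj jx jy (fun hje => hne (by rw [hje]))
      refine ⟨H', ?_, ?_, hH'card, ?_⟩
      · intro x
        refine (hH'sub x).trans ?_
        refine Fin.addCases (motive := fun x =>
          (Fin.addCases (sysM.2 i₀) Gf x : Finset V) ⊆ U) ?_ ?_ x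
        · intro j; rw [Fin.addCases_left]; exact (hsys i₀).1 j
        · intro j; rw [Fin.addCases_right]; exact hGfU j
      · intro x y hxy
        exact (hHdisj x y hxy).mono (hH'sub x) (hH'sub y)
      · refine seqDensity_le_of_totalE (G i₀) H' s hH'card hε0 ?_
        rw [← mul_assoc]
        exact hH'T
    · rw [Function.update_of_ne h]
      obtain ⟨hsubU, hdisj, hcards, hT⟩ := hsys i
      obtain ⟨X', hsub', hcard', hT'⟩ := shrink_to (G i) (sysM.2 i) hσor hcards
        (C := ε * (Np (sysM.1 i) : ℝ)) (by positivity)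
        (by rw [mul_assoc]; exact hT)
      refine ⟨X', fun x => (hsub' x).trans (hsubU x),
        fun x y hxy => (hdisj x y hxy).mono (hsub' x) (hsub' y), hcard', ?_⟩
      refine seqDensity_le_of_totalE (G i) X' s hcard' hε0 ?_
      rw [← mul_assoc]
      exact hT'

end SparseProof

set_option maxHeartbeats 1000000 in
open SparseProof in
theorem stmt9 {V : Type*} [Fintype V] {r : ℕ} (G : Fin r → SimpleGraph V)
    (α ρ ρ' ε : ℝ) (t : ℕ)
    (hα : α ∈ Set.Icc (0 : ℝ) 1) (hρ : ρ ∈ Set.Icc (0 : ℝ) 1)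
    (hρ' : ρ' ∈ Set.Icc (0 : ℝ) 1) (hε : ε ∈ Set.Icc (0 : ℝ) 1) (ht : 0 < t)
    (h1 : IsSparse G (α * ρ / 2) ρ' ε t)
    (h2 : IsSparse G α ρ (ε / 4) 2) :
    IsSparse G α (ρ * ρ' / 2) ε (2 * t) := by
  classical
  obtain ⟨hα0, hα1⟩ := hα
  obtain ⟨hρ0, hρ1⟩ := hρ
  obtain ⟨hρ'0, hρ'1⟩ := hρ'
  obtain ⟨hε0, hε1⟩ := hε
  rcases Nat.eq_zero_or_pos r with hr | hr
  · subst hr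
    exfalso
    obtain ⟨ts, -, hprod, -⟩ := h2 Finset.univ (by
      rw [Finset.card_univ]
      exact mul_le_of_le_one_left (Nat.cast_nonneg _) hα1)
    rw [Finset.univ_eq_empty, Finset.prod_empty] at hprod
    omega
  intro U hU
  set s := ⌈ρ * ρ' / 2 * (U.card : ℝ)⌉₊ with hs
  by_cases hs0 : s = 0
  · refine ⟨fun i => if i = ⟨0, hr⟩ then 2 * t else 1, ?_, ?_, ?_⟩
    · intro i
      by_cases h : i = ⟨0, hr⟩ <;> simp [h] <;> omega
    · rw [Finset.prod_ite_eq' Finset.univ (⟨0, hr⟩ : Fin r) (fun _ => 2 * t)]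
      simp
    · intro i
      refine ⟨fun _ => (∅ : Finset V), fun a => Finset.empty_subset U,
        fun a b _ => Finset.disjoint_left.mpr (by simp), ?_, ?_⟩
      · intro a
        rw [Finset.card_empty]
        omega
      · have hz : seqDensity (G i) (fun _ : Fin (if i = ⟨0, hr⟩ then 2 * t else 1) =>
            (∅ : Finset V)) = 0 := by
          rw [seqDensity]
          simp [pairEdges]
        rw [hz]
        exact hε0
  -- main case
  have hs1 : 1 ≤ s := Nat.pos_of_ne_zero hs0
  have hsR : (0:ℝ) < ρ * ρ' / 2 * U.card := by
    have := Nat.pos_of_ne_zero hs0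
    rw [hs] at this
    exact (Nat.ceil_pos).mp this
  have hucast : (0:ℝ) ≤ (U.card : ℝ) := Nat.cast_nonneg _
  have hρpos : 0 < ρ := by
    by_contra h
    push_neg at h
    nlinarith [mul_nonneg hρ'0 hucast, hsR]
  have hρ'pos : 0 < ρ' := by
    by_contra h
    push_neg at h
    nlinarith [mul_nonneg hρ0 hucast, hsR]
  have hupos : (0:ℝ) < (U.card : ℝ) := by
    by_contra h
    push_neg at h
    nlinarith [mul_nonneg hρ0 hρ'0, hsR]
  -- apply h2
  obtain ⟨ts2, hts2pos, hts2prod, hfam2⟩ := h2 U hU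
  have hi₀ : ∃ i, 2 ≤ ts2 i := by
    by_contra h
    push_neg at h
    have hle : (∏ i, ts2 i) ≤ ∏ _i : Fin r, 1 :=
      Finset.prod_le_prod' (fun i _ => by have := h i; omega)
    rw [Finset.prod_const_one] at hle
    omega
  obtain ⟨i₀, hi₀⟩ := hi₀
  obtain ⟨Z, hZU, hZdisj, hZcard, hZden⟩ := hfam2 i₀
  set m := ⌈ρ * (U.card : ℝ)⌉₊ with hm
  have hZcard' : ∀ a, (Z a).card = m := fun a => by rw [hm]; exact hZcard a
  have hmpos : 0 < m := by
    rw [hm]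
    exact Nat.ceil_pos.mpr (by positivity)
  have hmu : ρ * (U.card : ℝ) ≤ (m : ℝ) := by rw [hm]; exact Nat.le_ceil _
  obtain ⟨pa, pb, hpab, hpe⟩ := exists_sparse_pair (G i₀) Z hi₀ m hZcard'
    (show (0:ℝ) ≤ ε/4 by linarith) hZden
  set U₁ := Z pa with hU₁
  set U₂ := Z pb with hU₂
  have hU₁₂ : Disjoint U₁ U₂ := hZdisj pa pb (ne_of_lt hpab)
  have hU₁card : U₁.card = m := hZcard' pa
  have hU₂card : U₂.card = m := hZcard' pb
  have hU₁U : U₁ ⊆ U := hZU pa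
  have hU₂U : U₂ ⊆ U := hZU pb
  -- window size
  set w1 := ⌈α * ρ / 2 * ((Fintype.card V : ℕ) : ℝ)⌉₊ with hw1def
  set w2 := ⌊((s:ℝ) - 1) / ρ'⌋₊ + 1 with hw2def
  set w := max w1 w2 with hwdef
  have hw0 : 0 < w := lt_of_lt_of_le (Nat.succ_pos _) (le_max_right w1 w2)
  set σ := ⌈ρ' * ((w : ℕ) : ℝ)⌉₊ with hσdef
  have hwα : α * ρ / 2 * ((Fintype.card V : ℕ) : ℝ) ≤ ((w : ℕ) : ℝ) := by
    refine le_trans (Nat.le_ceil _) ?_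
    exact_mod_cast le_max_left w1 w2
  have hsσ : s ≤ σ := by
    have hfl : ((s:ℝ) - 1) / ρ' < ((w2 : ℕ) : ℝ) := by
      rw [hw2def]
      push_cast
      exact Nat.lt_floor_add_one _
    have hflw : ((s:ℝ) - 1) / ρ' < ((w : ℕ) : ℝ) :=
      hfl.trans_le (by exact_mod_cast le_max_right w1 w2)
    have h1' : ((s:ℝ) - 1) < ρ' * ((w : ℕ) : ℝ) := by
      rw [div_lt_iff₀ hρ'pos] at hflw
      linarith [hflw]
    have h2' : (s - 1 : ℕ) < σ := by
      rw [hσdef]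
      apply Nat.lt_ceil.mpr
      rw [Nat.cast_sub hs1]
      exact_mod_cast h1'
    omega
  have hss : ρ * ρ' / 2 * (U.card : ℝ) ≤ (s : ℝ) := by rw [hs]; exact Nat.le_ceil _
  have hsup : (s:ℝ) < ρ * ρ' / 2 * (U.card : ℝ) + 1 := by
    rw [hs]
    exact Nat.ceil_lt_add_one (by positivity)
  have hαn : α * ((Fintype.card V : ℕ) : ℝ) ≤ (U.card : ℝ) := hU
  have hσs1 : σ ≤ s + 1 := by
    rw [hσdef]
    apply Nat.ceil_le.mpr
    push_cast
    have hcases := max_choice w1 w2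
    rcases hcases with hmx | hmx
    · rw [hwdef, hmx]
      have hcl : ((w1 : ℕ) : ℝ) < α * ρ / 2 * ((Fintype.card V : ℕ) : ℝ) + 1 := by
        rw [hw1def]
        exact Nat.ceil_lt_add_one
          (mul_nonneg (div_nonneg (mul_nonneg hα0 hρ0) (by norm_num)) (Nat.cast_nonneg _))
      have hstep1 : ρ' * ((w1 : ℕ) : ℝ) ≤ ρ' * (α * ρ / 2 * ((Fintype.card V : ℕ) : ℝ) + 1) :=
        mul_le_mul_of_nonneg_left (le_of_lt hcl) hρ'0
      have hstep2 : ρ * ρ' / 2 * (α * ((Fintype.card V : ℕ) : ℝ))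
          ≤ ρ * ρ' / 2 * (U.card : ℝ) :=
        mul_le_mul_of_nonneg_left hαn (by positivity)
      nlinarith [hss, hρ'1]
    · rw [hwdef, hmx]
      have hfl : ((⌊((s:ℝ) - 1) / ρ'⌋₊ : ℕ) : ℝ) ≤ ((s:ℝ) - 1) / ρ' := by
        apply Nat.floor_le
        have hone : (1:ℝ) ≤ (s:ℝ) := by exact_mod_cast hs1
        exact div_nonneg (by linarith) (le_of_lt hρ'pos)
      have hw2cast : ((w2 : ℕ) : ℝ) = ((⌊((s:ℝ) - 1) / ρ'⌋₊ : ℕ) : ℝ) + 1 := by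
        rw [hw2def]; push_cast; ring
      have hmul : ρ' * (((s:ℝ) - 1) / ρ') = (s:ℝ) - 1 := by field_simp
      nlinarith
  have hwm : ((w : ℕ) : ℝ) ≤ (m:ℝ)/2 + 1 := by
    have hcases := max_choice w1 w2
    rcases hcases with hmx | hmx
    · rw [hwdef, hmx]
      have hcl : ((w1 : ℕ) : ℝ) < α * ρ / 2 * ((Fintype.card V : ℕ) : ℝ) + 1 := by
        rw [hw1def]
        exact Nat.ceil_lt_add_one
          (mul_nonneg (div_nonneg (mul_nonneg hα0 hρ0) (by norm_num)) (Nat.cast_nonneg _))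
      have hstep2 : ρ / 2 * (α * ((Fintype.card V : ℕ) : ℝ)) ≤ ρ / 2 * (U.card : ℝ) :=
        mul_le_mul_of_nonneg_left hαn (by positivity)
      nlinarith [hmu]
    · rw [hwdef, hmx]
      have hfl : ((⌊((s:ℝ) - 1) / ρ'⌋₊ : ℕ) : ℝ) ≤ ((s:ℝ) - 1) / ρ' := by
        apply Nat.floor_le
        have hone : (1:ℝ) ≤ (s:ℝ) := by exact_mod_cast hs1
        exact div_nonneg (by linarith) (le_of_lt hρ'pos)
      have hw2cast : ((w2 : ℕ) : ℝ) = ((⌊((s:ℝ) - 1) / ρ'⌋₊ : ℕ) : ℝ) + 1 := by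
        rw [hw2def]; push_cast; ring
      have hdiv : ((s:ℝ) - 1) / ρ' < (m:ℝ)/2 := by
        rw [div_lt_iff₀ hρ'pos]
        -- s - 1 < ρρ'u/2 ≤ ρ' m/2
        nlinarith
      linarith
  have hσpos : 0 < σ := lt_of_lt_of_le hs1 hsσ
  have hσor : σ = s ∨ σ = s + 1 := by omega
  -- the h1 application packaged
  have happgen : ∀ W : Finset V, W ⊆ U → W.card = w →
      ∃ o : ObjT V r,
        ((∀ i, 0 < o.1 i) ∧ (t ≤ ∏ i, o.1 i) ∧ ∀ i, (∀ j, o.2 i j ⊆ U)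
          ∧ (∀ j j', j ≠ j' → Disjoint (o.2 i j) (o.2 i j'))
          ∧ (∀ j, (o.2 i j).card = σ)
          ∧ ((totalE (G i) (o.2 i) : ℝ) ≤ ε * ((Np (o.1 i) : ℝ) * (σ:ℝ)^2)))
        ∧ 0 < o.1 i₀ ∧ (∀ j, o.2 i₀ j ⊆ W)
        ∧ (∀ j j', j ≠ j' → Disjoint (o.2 i₀ j) (o.2 i₀ j'))
        ∧ (∀ j, (o.2 i₀ j).card = σ) := by
    intro W hWU hWcard
    obtain ⟨ts1, hpos1, hprod1, hfam1⟩ := h1 W (by rw [hWcard]; exact hwα)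
    choose Wf hWfU hWfd hWfc hWfden using hfam1
    have hcards : ∀ i (j : Fin (ts1 i)), (Wf i j).card = σ := by
      intro i j
      rw [hWfc i j, hWcard, hσdef]
    refine ⟨⟨ts1, Wf⟩, ⟨hpos1, hprod1, fun i => ⟨fun j => (hWfU i j).trans hWU,
      hWfd i, hcards i, ?_⟩⟩, hpos1 i₀, hWfU i₀, hWfd i₀, hcards i₀⟩
    exact totalE_le_of_seqDensity (G i) (Wf i) σ (hcards i) hε0 (hWfden i)
  obtain ⟨P1, O1, hG1, hsub1, hdisj1, hcount1⟩ :=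
    extract i₀ σ w hσpos hw0 U₁ _ (fun W hWs hWc => happgen W (hWs.trans hU₁U) hWc)
      U₁.card U₁ le_rfl subset_rfl
  obtain ⟨P2, O2, hG2, hsub2, hdisj2, hcount2⟩ :=
    extract i₀ σ w hσpos hw0 U₂ _ (fun W hWs hWc => happgen W (hWs.trans hU₂U) hWc)
      U₂.card U₂ le_rfl subset_rfl
  set A1 : ℝ := ∑ p, ((O1 p).1 i₀ : ℝ) with hA1
  set A2 : ℝ := ∑ q, ((O2 q).1 i₀ : ℝ) with hA2
  have hmass : ∀ (P : ℕ) (O : Fin P → ObjT V r) (Uc : ℕ), Uc = m →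
      (Uc < w + ∑ p, (O p).1 i₀ * σ) → (m:ℝ)/2 ≤ (σ:ℝ) * ∑ p, ((O p).1 i₀ : ℝ) := by
    intro P O Uc hUc hcnt
    have hnat : m + 1 ≤ w + ∑ p, (O p).1 i₀ * σ := by omega
    have hc2 := (Nat.cast_le (α := ℝ)).mpr hnat
    push_cast at hc2
    have hsummul : (∑ p, ((O p).1 i₀ : ℝ) * (σ:ℝ)) = (σ:ℝ) * ∑ p, ((O p).1 i₀ : ℝ) := by
      rw [← Finset.sum_mul]; ring
    rw [hsummul] at hc2
    linarith
  have hmass1 : (m:ℝ)/2 ≤ (σ:ℝ) * A1 := by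
    rw [hA1]; exact hmass P1 O1 U₁.card hU₁card hcount1
  have hmass2 : (m:ℝ)/2 ≤ (σ:ℝ) * A2 := by
    rw [hA2]; exact hmass P2 O2 U₂.card hU₂card hcount2
  have hmcast : (1:ℝ) ≤ (m:ℝ) := by exact_mod_cast hmpos
  have hsel : ∃ (p : Fin P1) (q : Fin P2),
      (pairEdges (G i₀) (unionO i₀ (O1 p)) (unionO i₀ (O2 q)) : ℝ)
        ≤ ε * ((O1 p).1 i₀ : ℝ) * ((O2 q).1 i₀ : ℝ) * (σ:ℝ)^2 := by
    by_contra hcon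
    push_neg at hcon
    have hP1 : 0 < P1 := by
      by_contra hP
      push_neg at hP
      have hP0 : P1 = 0 := by omega
      subst hP0
      have : A1 = 0 := by rw [hA1]; simp
      rw [this, mul_zero] at hmass1
      linarith
    have hP2 : 0 < P2 := by
      by_contra hP
      push_neg at hP
      have hP0 : P2 = 0 := by omega
      subst hP0
      have : A2 = 0 := by rw [hA2]; simp
      rw [this, mul_zero] at hmass2
      linarith
    have hne : ((Finset.univ : Finset (Fin P1 × Fin P2))).Nonempty :=
      ⟨(⟨0, hP1⟩, ⟨0, hP2⟩), Finset.mem_univ _⟩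
    have hstrict := Finset.sum_lt_sum_of_nonempty hne
      (f := fun pq : Fin P1 × Fin P2 =>
        ε * ((O1 pq.1).1 i₀ : ℝ) * ((O2 pq.2).1 i₀ : ℝ) * (σ:ℝ)^2)
      (g := fun pq : Fin P1 × Fin P2 =>
        (pairEdges (G i₀) (unionO i₀ (O1 pq.1)) (unionO i₀ (O2 pq.2)) : ℝ))
      (fun pq _ => hcon pq.1 pq.2)
    have hq1 : (∑ pq : Fin P1 × Fin P2,
        ε * ((O1 pq.1).1 i₀ : ℝ) * ((O2 pq.2).1 i₀ : ℝ) * (σ:ℝ)^2)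
        = ε * (σ:ℝ)^2 * A1 * A2 := by
      rw [← Finset.univ_product_univ, Finset.sum_product]
      have hin : ∀ p : Fin P1, (∑ q : Fin P2,
          ε * ((O1 p).1 i₀ : ℝ) * ((O2 q).1 i₀ : ℝ) * (σ:ℝ)^2)
          = (ε * ((O1 p).1 i₀ : ℝ) * (σ:ℝ)^2) * A2 := by
        intro p
        rw [hA2, Finset.mul_sum]
        exact Finset.sum_congr rfl fun q _ => by ring
      have hout : (∑ p, ε * ((O1 p).1 i₀ : ℝ) * (σ:ℝ)^2) = ε * (σ:ℝ)^2 * A1 := by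
        rw [hA1, Finset.mul_sum]
        exact Finset.sum_congr rfl fun p _ => by ring
      rw [Finset.sum_congr rfl fun p _ => hin p, ← Finset.sum_mul, hout]
    have hq2 : (∑ pq : Fin P1 × Fin P2,
        (pairEdges (G i₀) (unionO i₀ (O1 pq.1)) (unionO i₀ (O2 pq.2)) : ℝ))
        ≤ (pairEdges (G i₀) U₁ U₂ : ℝ) := by
      have hN := sum_pairEdges_le (G i₀) (fun p => unionO i₀ (O1 p))
        (fun q => unionO i₀ (O2 q)) U₁ U₂ hsub1 hsub2 hdisj1 hdisj2
      have : (∑ pq : Fin P1 × Fin P2,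
          (pairEdges (G i₀) (unionO i₀ (O1 pq.1)) (unionO i₀ (O2 pq.2)) : ℝ))
          = ((∑ p, ∑ q, pairEdges (G i₀) (unionO i₀ (O1 p)) (unionO i₀ (O2 q)) : ℕ) : ℝ) := by
        rw [← Finset.univ_product_univ, Finset.sum_product]
        push_cast
        rfl
      rw [this]
      exact_mod_cast hN
    have hfinal : ε / 4 * (m:ℝ)^2 ≤ ε * (σ:ℝ)^2 * A1 * A2 := by
      have hA1nn : (0:ℝ) ≤ (σ:ℝ) * A1 := le_trans (by linarith) hmass1
      have hA2nn : (0:ℝ) ≤ (σ:ℝ) * A2 := le_trans (by linarith) hmass2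
      have hmm : ((m:ℝ)/2) * ((m:ℝ)/2) ≤ ((σ:ℝ) * A1) * ((σ:ℝ) * A2) :=
        mul_le_mul hmass1 hmass2 (by linarith) hA1nn
      nlinarith
    rw [hq1] at hstrict
    linarith [hq2, hpe, hfinal, hstrict]
  obtain ⟨p, q, hpq⟩ := hsel
  obtain ⟨hGpos1, hGprod1, hGsys1⟩ := hG1 p
  obtain ⟨hGpos2, hGprod2, hGsys2⟩ := hG2 q
  have hsubU₁ : ∀ jx, (O1 p).2 i₀ jx ⊆ U₁ := by
    intro jx
    refine (Finset.subset_biUnion_of_mem _ (Finset.mem_univ jx)).trans ?_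
    exact hsub1 p
  have hsubU₂ : ∀ jy, (O2 q).2 i₀ jy ⊆ U₂ := by
    intro jy
    refine (Finset.subset_biUnion_of_mem _ (Finset.mem_univ jy)).trans ?_
    exact hsub2 q
  have hFG : ∀ jx jy, Disjoint ((O1 p).2 i₀ jx) ((O2 q).2 i₀ jy) :=
    fun jx jy => hU₁₂.mono (hsubU₁ jx) (hsubU₂ jy)
  have hcrossN : (∑ jx, ∑ jy, pairEdges (G i₀) ((O1 p).2 i₀ jx) ((O2 q).2 i₀ jy))
      ≤ pairEdges (G i₀) (unionO i₀ (O1 p)) (unionO i₀ (O2 q)) :=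
    sum_pairEdges_le (G i₀) ((O1 p).2 i₀) ((O2 q).2 i₀) _ _
      (fun jx => Finset.subset_biUnion_of_mem _ (Finset.mem_univ jx))
      (fun jy => Finset.subset_biUnion_of_mem _ (Finset.mem_univ jy))
      ((hGsys1 i₀).2.1) ((hGsys2 i₀).2.1)
  have hcross1 : (∑ jx, ∑ jy,
      (pairEdges (G i₀) ((O1 p).2 i₀ jx) ((O2 q).2 i₀ jy) : ℝ))
      ≤ ε * ((O1 p).1 i₀ : ℝ) * ((O2 q).1 i₀ : ℝ) * (σ:ℝ)^2 := by
    refine le_trans ?_ hpq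
    have : (∑ jx, ∑ jy, (pairEdges (G i₀) ((O1 p).2 i₀ jx) ((O2 q).2 i₀ jy) : ℝ))
        = ((∑ jx, ∑ jy, pairEdges (G i₀) ((O1 p).2 i₀ jx) ((O2 q).2 i₀ jy) : ℕ) : ℝ) := by
      push_cast
      rfl
    rw [this]
    exact_mod_cast hcrossN
  rcases le_total ((O1 p).1 i₀) ((O2 q).1 i₀) with hab | hab
  · exact assemble G ε hε0 i₀ t s σ hσor U (O1 p) hGpos1 hGprod1 hGsys1
      ((O2 q).1 i₀) hab ((O2 q).2 i₀) (hGsys2 i₀).1 (hGsys2 i₀).2.1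
      (hGsys2 i₀).2.2.1 (hGsys2 i₀).2.2.2 hFG hcross1
  · refine assemble G ε hε0 i₀ t s σ hσor U (O2 q) hGpos2 hGprod2 hGsys2
      ((O1 p).1 i₀) hab ((O1 p).2 i₀) (hGsys1 i₀).1 (hGsys1 i₀).2.1
      (hGsys1 i₀).2.2.1 (hGsys1 i₀).2.2.2 (fun jx jy => (hFG jy jx).symm) ?_
    -- cross bound with swapped orientation
    have hswap : (∑ jx, ∑ jy,
        (pairEdges (G i₀) ((O2 q).2 i₀ jx) ((O1 p).2 i₀ jy) : ℝ))
        = ∑ jx, ∑ jy,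
        (pairEdges (G i₀) ((O1 p).2 i₀ jx) ((O2 q).2 i₀ jy) : ℝ) := by
      rw [Finset.sum_comm]
      exact Finset.sum_congr rfl fun a _ => Finset.sum_congr rfl fun b _ => by
        rw [pairEdges_comm]
    rw [hswap]
    exact le_trans hcross1 (le_of_eq (by ring))
end
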